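/- arXiv:2411.14341 — 2 statements merged into one kernel-verified Lean document; each statement's English description precedes it below -/
import Mathlib

section
/- Fix real numbers $t > 0$ and $\alpha_0, \alpha_1, \gamma_0, \gamma_1 > 0$, and define $f : (0, t) \to \mathbb{R}$ by $f(x) = \frac{\alpha_1 - \gamma_1/\sqrt{x}}{\alpha_0 + \gamma_0/\sqrt{t-x} + \alpha_1 - \gamma_1/\sqrt{x}}$ (assuming the denominator is positive on the domain considered). Then for any interval $[s, r] \subseteq [1, t)$ on which $f$ is well-defined, every minimizer $x^*$ of $f$ over $[s, r]$ satisfies $x^* \in \{s, r\}$. -/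
/-- Derivative of `z ↦ α1 - γ1 / √z`. -/
lemma count_aux_derivN (α1 γ1 y : ℝ) (hy : 0 < y) :
    HasDerivAt (fun z => α1 - γ1 / Real.sqrt z) (γ1 / (2 * y * Real.sqrt y)) y := by
  have hs0 : Real.sqrt y ≠ 0 := ne_of_gt (Real.sqrt_pos.2 hy)
  have h1 : HasDerivAt Real.sqrt (1 / (2 * Real.sqrt y)) y := Real.hasDerivAt_sqrt (ne_of_gt hy)
  have h3 := ((h1.inv hs0).const_mul γ1).const_sub α1
  have heq : -(γ1 * (-(1 / (2 * Real.sqrt y)) / (Real.sqrt y) ^ 2)) = γ1 / (2 * y * Real.sqrt y) := by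
    rw [show (Real.sqrt y) ^ 2 = y from Real.sq_sqrt hy.le]
    field_simp
  have h4 : (fun z => α1 - γ1 * Real.sqrt⁻¹ z) = fun z => α1 - γ1 / Real.sqrt z := by
    funext z; simp [div_eq_mul_inv]
  rw [h4, heq] at h3
  exact h3

/-- Derivative of `z ↦ α0 + γ0 / √(t - z)`. -/
lemma count_aux_derivH (α0 γ0 t y : ℝ) (hy : y < t) :
    HasDerivAt (fun z => α0 + γ0 / Real.sqrt (t - z)) (γ0 / (2 * (t - y) * Real.sqrt (t - y))) y := by
  have hty : 0 < t - y := by linarith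
  have hs0 : Real.sqrt (t - y) ≠ 0 := ne_of_gt (Real.sqrt_pos.2 hty)
  have hin : HasDerivAt (fun z : ℝ => t - z) (-1) y := by
    simpa using (hasDerivAt_id y).const_sub t
  have h1 : HasDerivAt (fun z => Real.sqrt (t - z)) (1 / (2 * Real.sqrt (t - y)) * (-1)) y :=
    (Real.hasDerivAt_sqrt (ne_of_gt hty)).comp y hin
  have h2 := ((h1.inv hs0).const_mul γ0).const_add α0
  have heq : γ0 * (-(1 / (2 * Real.sqrt (t - y)) * (-1)) / (Real.sqrt (t - y)) ^ 2)
      = γ0 / (2 * (t - y) * Real.sqrt (t - y)) := by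
    rw [show (Real.sqrt (t - y)) ^ 2 = t - y from Real.sq_sqrt hty.le]
    field_simp
  have h4 : (fun z => α0 + γ0 * (fun z => Real.sqrt (t - z))⁻¹ z) = fun z => α0 + γ0 / Real.sqrt (t - z) := by
    funext z; simp [div_eq_mul_inv]
  rw [h4, heq] at h2
  exact h2

/-- The minimizer of `f(x) = (α₁ - γ₁/√x)/(α₀ + γ₀/√(t-x) + α₁ - γ₁/√x)` over a
closed subinterval `[s,r] ⊆ [1,t)` occurs at an endpoint. -/
theorem count_interval_optimization
    (t α0 α1 γ0 γ1 s r : ℝ)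
    (ht : 0 < t) (hα0 : 0 < α0) (hα1 : 0 < α1) (hγ0 : 0 < γ0) (hγ1 : 0 < γ1)
    (hs : 1 ≤ s) (hsr : s ≤ r) (hrt : r < t)
    (f : ℝ → ℝ)
    (hf : ∀ x, f x = (α1 - γ1 / Real.sqrt x) /
        (α0 + γ0 / Real.sqrt (t - x) + α1 - γ1 / Real.sqrt x))
    (hden : ∀ x ∈ Set.Icc s r,
      0 < α0 + γ0 / Real.sqrt (t - x) + α1 - γ1 / Real.sqrt x) :
    ∀ x ∈ Set.Icc s r, (∀ y ∈ Set.Icc s r, f x ≤ f y) → x = s ∨ x = r := by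
  intro x hx hmin
  by_contra hcon
  push_neg at hcon
  obtain ⟨hxs, hxr⟩ := hcon
  have hsx : s < x := lt_of_le_of_ne hx.1 (Ne.symm hxs)
  have hxr' : x < r := lt_of_le_of_ne hx.2 hxr
  set N : ℝ → ℝ := fun y => α1 - γ1 / Real.sqrt y with hN
  set H : ℝ → ℝ := fun y => α0 + γ0 / Real.sqrt (t - y) with hH
  have hy0 : ∀ y ∈ Set.Icc s r, 0 < y := fun y hy => lt_of_lt_of_le (by linarith) hy.1
  have hty : ∀ y ∈ Set.Icc s r, y < t := fun y hy => lt_of_le_of_lt hy.2 hrt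
  have hHpos : ∀ y ∈ Set.Icc s r, 0 < H y := by
    intro y hy
    have h1 : 0 < Real.sqrt (t - y) := Real.sqrt_pos.2 (by have := hty y hy; linarith)
    have : 0 < γ0 / Real.sqrt (t - y) := div_pos hγ0 h1
    simp only [hH]; linarith
  have hDen : ∀ y ∈ Set.Icc s r, 0 < N y + H y := by
    intro y hy
    have := hden y hy
    simp only [hN, hH]; linarith
  -- the key nonnegative function
  set g : ℝ → ℝ := fun y => N y * H x - N x * H y with hg
  have hgx : g x = 0 := by simp [hg]
  have hg0 : ∀ y ∈ Set.Icc s r, 0 ≤ g y := by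
    intro y hy
    have h1 := hmin y hy
    rw [hf x, hf y] at h1
    have h2 : N x / (N x + H x) ≤ N y / (N y + H y) := by
      have e1 : α0 + γ0 / Real.sqrt (t - x) + α1 - γ1 / Real.sqrt x = N x + H x := by
        simp only [hN, hH]; ring
      have e2 : α0 + γ0 / Real.sqrt (t - y) + α1 - γ1 / Real.sqrt y = N y + H y := by
        simp only [hN, hH]; ring
      rw [e1, e2] at h1
      exact h1
    rw [div_le_div_iff₀ (hDen x hx) (hDen y hy)] at h2
    simp only [hg]
    nlinarith [h2]
  -- derivative of g
  have hgd : ∀ y ∈ Set.Icc s r, HasDerivAt g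
      (γ1 / (2 * y * Real.sqrt y) * H x - N x * (γ0 / (2 * (t - y) * Real.sqrt (t - y)))) y := by
    intro y hy
    exact ((count_aux_derivN α1 γ1 y (hy0 y hy)).mul_const (H x)).sub
      ((count_aux_derivH α0 γ0 t y (hty y hy)).const_mul (N x))
  have hgc : ContinuousOn g (Set.Icc s r) := fun y hy =>
    (hgd y hy).differentiableAt.continuousAt.continuousWithinAt
  have hsmem : s ∈ Set.Icc s r := ⟨le_refl s, hsr⟩
  have hrmem : r ∈ Set.Icc s r := ⟨hsr, le_refl r⟩
  rcases lt_or_ge (N x) 0 with hNx | hNx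
  · -- N x < 0 : g is strictly increasing, so g s < g x = 0, contradiction
    have hmono : StrictMonoOn g (Set.Icc s r) := by
      apply strictMonoOn_of_deriv_pos (convex_Icc s r) hgc
      intro y hy
      rw [interior_Icc] at hy
      have hy' : y ∈ Set.Icc s r := ⟨hy.1.le, hy.2.le⟩
      rw [(hgd y hy').deriv]
      have hyp := hy0 y hy'
      have htp : 0 < t - y := by have := hty y hy'; linarith
      have hsq : 0 < Real.sqrt y := Real.sqrt_pos.2 hyp
      have hsq' : 0 < Real.sqrt (t - y) := Real.sqrt_pos.2 htp
      have h1 : 0 < γ1 / (2 * y * Real.sqrt y) * H x :=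
        mul_pos (div_pos hγ1 (by positivity)) (hHpos x hx)
      have h2 : N x * (γ0 / (2 * (t - y) * Real.sqrt (t - y))) < 0 :=
        mul_neg_of_neg_of_pos hNx (div_pos hγ0 (by positivity))
      linarith
    have := hmono hsmem hx hsx
    rw [hgx] at this
    exact absurd this (not_lt.2 (hg0 s hsmem))
  · -- 0 ≤ N x : g is strictly concave
    have hanti : StrictAntiOn (deriv g) (interior (Set.Icc s r)) := by
      rw [interior_Icc]
      intro a ha b hb hab
      have ha' : a ∈ Set.Icc s r := ⟨ha.1.le, ha.2.le⟩
      have hb' : b ∈ Set.Icc s r := ⟨hb.1.le, hb.2.le⟩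
      rw [(hgd a ha').deriv, (hgd b hb').deriv]
      have hap := hy0 a ha'
      have hbp := hy0 b hb'
      have hta : 0 < t - a := by have := hty a ha'; linarith
      have htb : 0 < t - b := by have := hty b hb'; linarith
      have hsa : 0 < Real.sqrt a := Real.sqrt_pos.2 hap
      have hsb : 0 < Real.sqrt b := Real.sqrt_pos.2 hbp
      have hsta : 0 < Real.sqrt (t - a) := Real.sqrt_pos.2 hta
      have hstb : 0 < Real.sqrt (t - b) := Real.sqrt_pos.2 htb
      have h1 : γ1 / (2 * b * Real.sqrt b) < γ1 / (2 * a * Real.sqrt a) := by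
        apply div_lt_div_of_pos_left hγ1 (by positivity)
        have hsab : Real.sqrt a < Real.sqrt b := Real.sqrt_lt_sqrt hap.le hab
        nlinarith
      have h2 : γ0 / (2 * (t - a) * Real.sqrt (t - a)) ≤ γ0 / (2 * (t - b) * Real.sqrt (t - b)) := by
        apply div_le_div_of_nonneg_left hγ0.le (by positivity)
        have : Real.sqrt (t - b) ≤ Real.sqrt (t - a) := Real.sqrt_le_sqrt (by linarith)
        nlinarith
      have h3 : N x * (γ0 / (2 * (t - a) * Real.sqrt (t - a)))
          ≤ N x * (γ0 / (2 * (t - b) * Real.sqrt (t - b))) :=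
        mul_le_mul_of_nonneg_left h2 hNx
      have h4 : γ1 / (2 * b * Real.sqrt b) * H x < γ1 / (2 * a * Real.sqrt a) * H x :=
        mul_lt_mul_of_pos_right h1 (hHpos x hx)
      linarith
    have hconc : StrictConcaveOn ℝ (Set.Icc s r) g :=
      hanti.strictConcaveOn_of_deriv (convex_Icc s r) hgc
    have hrs : 0 < r - s := by linarith
    have ha : (0:ℝ) < (r - x) / (r - s) := div_pos (by linarith) hrs
    have hb : (0:ℝ) < (x - s) / (r - s) := div_pos (by linarith) hrs
    have hab : (r - x) / (r - s) + (x - s) / (r - s) = 1 := by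
      field_simp
      ring
    have hne : s ≠ r := by linarith
    have hkey := hconc.2 hsmem hrmem hne ha hb hab
    have hcomb : (r - x) / (r - s) * s + (x - s) / (r - s) * r = x := by
      rw [div_mul_eq_mul_div, div_mul_eq_mul_div, ← add_div,
        div_eq_iff (ne_of_gt hrs)]
      ring
    simp only [smul_eq_mul] at hkey
    rw [hcomb, hgx] at hkey
    nlinarith [hg0 s hsmem, hg0 r hrmem, hkey, ha.le, hb.le,
      mul_nonneg ha.le (hg0 s hsmem), mul_nonneg hb.le (hg0 r hrmem)]
end

section
/- Fix $\alpha \in (0, 1/2)$ and $\delta \in (0,1)$. Define $\ell(t,\delta) = \log\log t + 0.72 \log(5.2/\delta)$ and $h(t) = \frac{1 - t^{\alpha - 1}}{2(1-\alpha)} - t^{(2\alpha-1)/2}\sqrt{\ell(t,\delta)}$. Set $c_1 = \frac{2}{\alpha^2} + \frac{8(1-\alpha)^2}{\alpha^2} \log(5.2/\delta)$ and $c_2 = \frac{8(1-\alpha)^2}{\alpha^2}$. Then $h(t) \ge 1/2$ for all $t$ satisfying $t^{1-2\alpha} \ge c_1 + c_2 \log\log t$. -/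
set_option maxHeartbeats 1000000


/-- 'Slow increase' lower bound: `h(t) ≥ 1/2` once `t^{1-2α} ≥ c₁ + c₂ log log t`. -/
theorem slow_increase_lower_bound
    (α δ : ℝ) (hα : α ∈ Set.Ioo (0 : ℝ) (1 / 2)) (hδ : δ ∈ Set.Ioo (0 : ℝ) 1)
    (ℓ : ℝ → ℝ → ℝ)
    (hℓ : ∀ t d, ℓ t d = Real.log (Real.log t) + 0.72 * Real.log (5.2 / d))
    (h : ℝ → ℝ)
    (hh : ∀ t, h t = (1 - t ^ (α - 1)) / (2 * (1 - α)) -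
      t ^ ((2 * α - 1) / 2) * Real.sqrt (ℓ t δ))
    (c1 c2 : ℝ)
    (hc1 : c1 = 2 / α ^ 2 + 8 * (1 - α) ^ 2 / α ^ 2 * Real.log (5.2 / δ))
    (hc2 : c2 = 8 * (1 - α) ^ 2 / α ^ 2) :
    ∀ t : ℝ, Real.exp 1 ≤ t →
      c1 + c2 * Real.log (Real.log t) ≤ t ^ (1 - 2 * α) → 1 / 2 ≤ h t := by
  intro t ht hcx
  obtain ⟨hα0, hα2⟩ := hα
  obtain ⟨hδ0, hδ1⟩ := hδ
  have h1α : 0 < 1 - α := by linarith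
  have ht0 : 0 < t := lt_of_lt_of_le (Real.exp_pos 1) ht
  have ht1 : 1 ≤ t := by
    have := Real.add_one_le_exp 1
    linarith
  have hlogt : 1 ≤ Real.log t := (Real.le_log_iff_exp_le ht0).mpr ht
  have hll : 0 ≤ Real.log (Real.log t) := Real.log_nonneg hlogt
  have hlog56 : 0 ≤ Real.log (5.2 / δ) := by
    apply Real.log_nonneg
    rw [le_div_iff₀ hδ0]; linarith
  have hL : 0 ≤ Real.log (Real.log t) + 0.72 * Real.log (5.2 / δ) := by linarith
  set S : ℝ := Real.sqrt (Real.log (Real.log t) + 0.72 * Real.log (5.2 / δ)) with hSdef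
  have hS : 0 ≤ S := Real.sqrt_nonneg _
  have hS2 : S ^ 2 = Real.log (Real.log t) + 0.72 * Real.log (5.2 / δ) :=
    Real.sq_sqrt hL
  set x : ℝ := t ^ ((1 - 2 * α) / 2) with hxdef
  have hxpos : 0 < x := Real.rpow_pos_of_pos ht0 _
  have hx2 : x ^ 2 = t ^ (1 - 2 * α) := by
    rw [hxdef, sq, ← Real.rpow_add ht0]
    congr 1; ring
  set v : ℝ := t ^ ((2 * α - 1) / 2) with hvdef
  have hvpos : 0 < v := Real.rpow_pos_of_pos ht0 _
  have hvx : v * x = 1 := by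
    rw [hvdef, hxdef, ← Real.rpow_add ht0,
      show (2 * α - 1) / 2 + (1 - 2 * α) / 2 = 0 by ring, Real.rpow_zero]
  have hu : t ^ (α - 1) ≤ v := by
    rw [hvdef]
    exact Real.rpow_le_rpow_of_exponent_le ht1 (by linarith)
  have hc1' : α ^ 2 * c1 = 2 + 8 * (1 - α) ^ 2 * Real.log (5.2 / δ) := by
    rw [hc1]; field_simp
  have hc2' : α ^ 2 * c2 = 8 * (1 - α) ^ 2 := by
    rw [hc2]; field_simp
  have hax : α ^ 2 * (c1 + c2 * Real.log (Real.log t)) ≤ α ^ 2 * x ^ 2 := by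
    rw [hx2]
    exact mul_le_mul_of_nonneg_left hcx (sq_nonneg α)
  have hax2 : 2 + 8 * (1 - α) ^ 2 * Real.log (5.2 / δ)
      + 8 * (1 - α) ^ 2 * Real.log (Real.log t) ≤ (α * x) ^ 2 := by
    calc 2 + 8 * (1 - α) ^ 2 * Real.log (5.2 / δ)
        + 8 * (1 - α) ^ 2 * Real.log (Real.log t)
        = α ^ 2 * c1 + (α ^ 2 * c2) * Real.log (Real.log t) := by rw [hc1', hc2']
      _ = α ^ 2 * (c1 + c2 * Real.log (Real.log t)) := by ring
      _ ≤ α ^ 2 * x ^ 2 := hax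
      _ = (α * x) ^ 2 := by ring
  have hsq : (1 + 2 * (1 - α) * S) ^ 2 ≤ (α * x) ^ 2 := by
    nlinarith [sq_nonneg (1 - 2 * (1 - α) * S), hS2, hlog56,
      mul_nonneg (sq_nonneg (1 - α)) hlog56, hax2, sq_nonneg (1 - α)]
  have hkey : 1 + 2 * (1 - α) * S ≤ α * x := by
    have h1 : 0 ≤ 1 + 2 * (1 - α) * S := by
      have := mul_nonneg (by linarith : (0:ℝ) ≤ 2 * (1 - α)) hS
      linarith
    have h2 : 0 ≤ α * x := by positivity
    have := Real.sqrt_le_sqrt hsq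
    rwa [Real.sqrt_sq h1, Real.sqrt_sq h2] at this
  have hux : t ^ (α - 1) * x ≤ 1 := by
    calc t ^ (α - 1) * x ≤ v * x := mul_le_mul_of_nonneg_right hu hxpos.le
    _ = 1 := hvx
  have hvsx : v * S * x = S := by
    rw [show v * S * x = v * x * S by ring, hvx, one_mul]
  rw [hh, hℓ]
  have hvsx2 : α * (v * S * x) = α * S := by rw [hvsx]
  rw [le_sub_iff_add_le, le_div_iff₀ (by linarith : (0:ℝ) < 2 * (1 - α))]
  have hmul : (1 / 2 + v * S) * (2 * (1 - α)) * x ≤ (1 - t ^ (α - 1)) * x := by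
    linarith [hvsx, hvsx2, hux, hkey]
  exact (mul_le_mul_iff_of_pos_right hxpos).mp hmul
end
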